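/- Let T ∈ Sym(n,d) be a symmetric d-tensor and a·(u₁⊗…⊗u_d) a best rank one approximation of T. Then for every permutation σ of [d], the tensor a·(u_{σ(1)}⊗…⊗u_{σ(d)}) is also a best rank one approximation of T. In particular, if T has a unique best rank one approximation, then that approximation is symmetric. -/
import Mathlib


noncomputable section

/-- The decomposable tensor `x₁ ⊗ ⋯ ⊗ x_d`, as a multi-indexed array. -/
def dtens {ι : Type*} [Fintype ι] {n : ι → ℕ} (x : ∀ j, Fin (n j) → ℝ) :
    (∀ j, Fin (n j)) → ℝ :=
  fun idx => ∏ j, x j (idx j)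

/-- Entrywise inner product of tensors. -/
def tinner {ι : Type*} [Fintype ι] [DecidableEq ι] {n : ι → ℕ}
    (S T : (∀ j, Fin (n j)) → ℝ) : ℝ :=
  ∑ idx, S idx * T idx

/-- Hilbert–Schmidt norm of a tensor. -/
def hsNorm {ι : Type*} [Fintype ι] [DecidableEq ι] {n : ι → ℕ}
    (T : (∀ j, Fin (n j)) → ℝ) : ℝ :=
  Real.sqrt (∑ idx, T idx ^ 2)

/-- `v` is a unit vector in `ℝ^m`. -/
def isUnitVec {m : ℕ} (v : Fin m → ℝ) : Prop := ∑ i, v i ^ 2 = 1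

/-- The spectral (`(∞,2)`-Schatten) norm of a tensor: the supremum of
`|⟨T, x₁ ⊗ ⋯ ⊗ x_d⟩|` over unit vectors `x_j`. -/
def specNorm {ι : Type*} [Fintype ι] [DecidableEq ι] {n : ι → ℕ}
    (T : (∀ j, Fin (n j)) → ℝ) : ℝ :=
  sSup {r | ∃ x : ∀ j, Fin (n j) → ℝ, (∀ j, isUnitVec (x j)) ∧ r = |tinner T (dtens x)|}

/-- If `a · u₁ ⊗ ⋯ ⊗ u_d` is a best rank one approximation of a symmetric tensor `T`,
then so is `a · u_{σ(1)} ⊗ ⋯ ⊗ u_{σ(d)}` for every permutation `σ`; in particular, if the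
best rank one approximation is unique then it is symmetric. -/
theorem stmt9 {n d : ℕ} (T : (Fin d → Fin n) → ℝ)
    (hsym : ∀ (σ : Equiv.Perm (Fin d)) (idx : Fin d → Fin n), T (idx ∘ σ) = T idx)
    (a : ℝ) (u : Fin d → Fin n → ℝ) (hu : ∀ j, isUnitVec (u j))
    (hbest : ∀ (s : ℝ) (x : Fin d → Fin n → ℝ), (∀ j, isUnitVec (x j)) →
      hsNorm (T - a • dtens u) ≤ hsNorm (T - s • dtens x)) :
    (∀ (σ : Equiv.Perm (Fin d)) (s : ℝ) (x : Fin d → Fin n → ℝ), (∀ j, isUnitVec (x j)) →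
        hsNorm (T - a • dtens (u ∘ σ)) ≤ hsNorm (T - s • dtens x)) ∧
      ((∀ (b : ℝ) (v : Fin d → Fin n → ℝ), (∀ j, isUnitVec (v j)) →
          (∀ (s : ℝ) (x : Fin d → Fin n → ℝ), (∀ j, isUnitVec (x j)) →
            hsNorm (T - b • dtens v) ≤ hsNorm (T - s • dtens x)) →
          b • dtens v = a • dtens u) →
        ∃ (c : ℝ) (w : Fin n → ℝ), a • dtens u = c • dtens (fun _ : Fin d => w)) := by

  -- Key: permuting the factors does not change the approximation error.
  have key : ∀ σ : Equiv.Perm (Fin d),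
      hsNorm (T - a • dtens (u ∘ σ)) = hsNorm (T - a • dtens u) := by
    intro σ
    unfold hsNorm
    congr 1
    refine Fintype.sum_bijective (fun idx : Fin d → Fin n => idx ∘ ⇑σ.symm) ?_ _ _ ?_
    · constructor
      · intro f g h
        funext j
        simpa using congrFun h (σ j)
      · intro f
        exact ⟨f ∘ ⇑σ, by funext j; simp⟩
    · intro idx
      have h1 : dtens u (idx ∘ ⇑σ.symm) = dtens (u ∘ σ) idx := by
        unfold dtens
        exact (Fintype.prod_equiv σ (fun k => (u ∘ σ) k (idx k))
          (fun j => u j ((idx ∘ ⇑σ.symm) j)) (fun k => by simp)).symm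
      have h2 : T (idx ∘ ⇑σ.symm) = T idx := hsym σ.symm idx
      simp [Pi.sub_apply, Pi.smul_apply, smul_eq_mul, h1, h2]
  constructor
  · intro σ s x hx
    rw [key σ]
    exact hbest s x hx
  · intro huniq
    have hds : ∀ σ : Equiv.Perm (Fin d), a • dtens (u ∘ σ) = a • dtens u := by
      intro σ
      exact huniq a (u ∘ σ) (fun j => hu (σ j))
        (fun s x hx => by rw [key σ]; exact hbest s x hx)
    rcases eq_or_ne a 0 with rfl | ha
    · exact ⟨0, 0, by simp⟩
    have hdt : ∀ σ : Equiv.Perm (Fin d), dtens (u ∘ σ) = dtens u := by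
      intro σ
      funext idx
      have h := congrFun (hds σ) idx
      simp only [Pi.smul_apply, smul_eq_mul] at h
      exact mul_left_cancel₀ ha h
    rcases Nat.eq_zero_or_pos d with rfl | hd
    · refine ⟨a, 0, ?_⟩
      funext idx
      simp [dtens]
    rcases Nat.eq_zero_or_pos n with rfl | hn
    · exfalso
      have := hu ⟨0, hd⟩
      simp [isUnitVec] at this
    -- choose a base index where every vector is nonzero
    have hb : ∀ j : Fin d, ∃ i, u j i ≠ 0 := by
      intro j
      by_contra h
      push_neg at h
      have := hu j
      simp [isUnitVec, h] at this
    choose b hbne using hb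
    set j0 : Fin d := ⟨0, hd⟩ with hj0
    set P : (Fin d → Fin n) → ℝ := fun y => ∏ l, u l (y l) with hPdef
    have hupd : ∀ (y : Fin d → Fin n) (k : Fin d) (q : Fin n),
        P (Function.update y k q) * u k (y k) = u k q * P y := by
      intro y k q
      simp only [hPdef]
      rw [← Finset.mul_prod_erase Finset.univ
            (fun l => u l (Function.update y k q l)) (Finset.mem_univ k),
          ← Finset.mul_prod_erase Finset.univ (fun l => u l (y l)) (Finset.mem_univ k)]
      have he : ∏ l ∈ Finset.univ.erase k, u l (Function.update y k q l)
          = ∏ l ∈ Finset.univ.erase k, u l (y l) := by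
        refine Finset.prod_congr rfl fun l hl => ?_
        rw [Function.update_of_ne (Finset.ne_of_mem_erase hl)]
      rw [he, Function.update_self]
      ring
    have hPb : P b ≠ 0 := by
      simp only [hPdef]
      exact Finset.prod_ne_zero_iff.2 fun l _ => hbne l
    -- permutation invariance of P under precomposition with a swap
    have hswap : ∀ (k : Fin d) (idx : Fin d → Fin n),
        (∏ l, u l (idx (Equiv.swap j0 k l))) = P idx := by
      intro k idx
      have h := congrFun (hdt (Equiv.swap j0 k)) idx
      have h2 : dtens (u ∘ Equiv.swap j0 k) idx
          = ∏ l, u l (idx (Equiv.swap j0 k l)) := by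
        unfold dtens
        refine Fintype.prod_equiv (Equiv.swap j0 k) _ _ (fun l => ?_)
        simp [Equiv.swap_apply_self]
      rw [h2] at h
      exact h
    -- the two-point exchange relation
    have hlam : ∀ (k : Fin d) (q : Fin n),
        u k q * u j0 (b j0) = u k (b j0) * u j0 q := by
      intro k q
      rcases eq_or_ne k j0 with rfl | hk
      · ring
      · have e1 := hupd b k q
        have e2 := hupd b j0 q
        have e3 := hupd (Function.update b j0 q) k (b j0)
        rw [Function.update_of_ne hk] at e3
        have e5 : P (Function.update (Function.update b j0 q) k (b j0))
            = P (Function.update b k q) := by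
          have := hswap k (Function.update b k q)
          rw [← this]
          simp only [hPdef]
          refine Finset.prod_congr rfl fun l _ => ?_
          congr 1
          rcases eq_or_ne l j0 with rfl | hl0
          · rw [Equiv.swap_apply_left, Function.update_self,
              Function.update_of_ne hk.symm, Function.update_self]
          rcases eq_or_ne l k with rfl | hlk
          · rw [Equiv.swap_apply_right, Function.update_of_ne (Ne.symm hk),
              Function.update_self]
          · rw [Equiv.swap_apply_of_ne_of_ne hl0 hlk, Function.update_of_ne hlk,
              Function.update_of_ne hlk, Function.update_of_ne hl0]
        have main : (u k q * u j0 (b j0)) * P b = (u k (b j0) * u j0 q) * P b := by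
          calc (u k q * u j0 (b j0)) * P b
              = (u k q * P b) * u j0 (b j0) := by ring
            _ = (P (Function.update b k q) * u k (b k)) * u j0 (b j0) := by rw [e1]
            _ = (P (Function.update (Function.update b j0 q) k (b j0)) * u k (b k))
                  * u j0 (b j0) := by rw [e5]
            _ = (u k (b j0) * P (Function.update b j0 q)) * u j0 (b j0) := by rw [e3]
            _ = u k (b j0) * (P (Function.update b j0 q) * u j0 (b j0)) := by ring
            _ = u k (b j0) * (u j0 q * P b) := by rw [e2]
            _ = (u k (b j0) * u j0 q) * P b := by ring
        exact mul_right_cancel₀ hPb main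
    -- conclude: every u k is a multiple of u j0
    have hU0 : u j0 (b j0) ≠ 0 := hbne j0
    have hcol : ∀ (k : Fin d) (q : Fin n),
        u k q = (u k (b j0) / u j0 (b j0)) * u j0 q := by
      intro k q
      field_simp
      linarith [hlam k q]
    refine ⟨a * ∏ k, (u k (b j0) / u j0 (b j0)), u j0, ?_⟩
    funext idx
    simp only [Pi.smul_apply, smul_eq_mul]
    unfold dtens
    have : (∏ k, u k (idx k))
        = ∏ k, ((u k (b j0) / u j0 (b j0)) * u j0 (idx k)) := by
      refine Finset.prod_congr rfl fun k _ => ?_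
      exact hcol k (idx k)
    rw [this, Finset.prod_mul_distrib]
    ring
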